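/- Let G be a d-regular graph, k ≥ 1, and S a finite set of vertices that is internally spanned by the k-neighbor bootstrap rule from an initial occupied set A ⊆ S of size x. If w denotes the number of edges of G with exactly one endpoint in S, then d·x + (|S| - x)(d - 2k) ≥ w. In particular, if w > h|S| with h + 2k - d > 0, then x > |S|·(h - d + 2k)/(2k). -/
import Mathlib

variable {V : Type*}

/-- The bootstrap closure of `A` under the `k`-neighbor rule restricted to `S`
(vertices outside `S` stay permanently vacant). -/
def SimpleGraph.bootClosureIn (G : SimpleGraph V) (k : ℕ) (S A : Set V) : Set V :=
  ⋂₀ {B | A ⊆ B ∧ ∀ v ∈ S, k ≤ {w | G.Adj v w ∧ w ∈ B ∩ S}.ncard → v ∈ B}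

/-- `S` is internally spanned from `A ⊆ S` if the `k`-neighbor rule restricted to `S`,
started from `A`, eventually occupies all of `S`. -/
def SimpleGraph.InternallySpanned (G : SimpleGraph V) (k : ℕ) (S A : Set V) : Prop :=
  A ⊆ S ∧ S ⊆ G.bootClosureIn k S A

open Finset

private lemma boot_card_inter_insert [DecidableEq V] (s T : Finset V) (v : V) (hv : v ∉ T) :
    (s ∩ insert v T).card = (s ∩ T).card + (if v ∈ s then 1 else 0) := by
  by_cases h : v ∈ s
  · rw [inter_comm, Finset.insert_inter_of_mem h,
      Finset.card_insert_of_notMem (by simp [hv]), inter_comm, if_pos h]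
  · rw [inter_comm, Finset.insert_inter_of_notMem h, inter_comm, if_neg h]
    omega

private lemma boot_sum_ite [DecidableEq V] (G : SimpleGraph V) [G.LocallyFinite]
    (v : V) (T : Finset V) :
    ∑ u ∈ T, (if v ∈ G.neighborFinset u then 1 else 0) = (G.neighborFinset v ∩ T).card := by
  rw [inter_comm, ← Finset.filter_mem_eq_inter, Finset.card_filter]
  refine Finset.sum_congr rfl fun u _ => if_congr ?_ rfl rfl
  simp only [SimpleGraph.mem_neighborFinset]
  exact G.adj_comm u v

private lemma boot_sum_inter_comm [DecidableEq V] (G : SimpleGraph V) [G.LocallyFinite]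
    (P Q : Finset V) :
    ∑ v ∈ P, (G.neighborFinset v ∩ Q).card = ∑ u ∈ Q, (G.neighborFinset u ∩ P).card := by
  have key : ∀ (Y : Finset V) (v : V), (G.neighborFinset v ∩ Y).card
      = ∑ u ∈ Y, if u ∈ G.neighborFinset v then 1 else 0 := by
    intro Y v
    rw [inter_comm, ← Finset.filter_mem_eq_inter, Finset.card_filter]
  have flip : ∀ u v : V, (u ∈ G.neighborFinset v) ↔ (v ∈ G.neighborFinset u) := by
    intro u v; simp only [SimpleGraph.mem_neighborFinset]; exact G.adj_comm v u
  simp only [key]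
  rw [Finset.sum_comm]
  exact Finset.sum_congr rfl fun u _ => Finset.sum_congr rfl fun v _ =>
    if_congr (flip u v) rfl rfl

private lemma boot_mono (G : SimpleGraph V) (k : ℕ) (S : Set V) {A A' : Set V} (h : A ⊆ A') :
    G.bootClosureIn k S A ⊆ G.bootClosureIn k S A' :=
  fun x hx => Set.mem_sInter.2 fun B hB => Set.mem_sInter.1 hx B ⟨h.trans hB.1, hB.2⟩

private lemma boot_exists_infectable [DecidableEq V] (G : SimpleGraph V) [G.LocallyFinite]
    (k : ℕ) (S A : Finset V) (hAS : A ⊆ S)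
    (hspan : (S : Set V) ⊆ G.bootClosureIn k (S : Set V) (A : Set V))
    (hne : ¬ S ⊆ A) :
    ∃ v ∈ S, v ∉ A ∧ k ≤ (G.neighborFinset v ∩ A).card := by
  by_contra hcon
  push_neg at hcon
  apply hne
  intro x hx
  have hmem : (A : Set V) ∈ {B : Set V | (A : Set V) ⊆ B ∧
      ∀ v ∈ (S : Set V), k ≤ {w | G.Adj v w ∧ w ∈ B ∩ (S : Set V)}.ncard → v ∈ B} := by
    refine ⟨subset_rfl, ?_⟩
    intro v hv hcard
    by_contra hvA
    have hvS : v ∈ S := hv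
    have hvA' : v ∉ A := by simpa using hvA
    have hset : {w | G.Adj v w ∧ w ∈ (A : Set V) ∩ (S : Set V)}
        = ((G.neighborFinset v ∩ A : Finset V) : Set V) := by
      ext u
      simp only [Set.mem_setOf_eq, Set.mem_inter_iff, Finset.coe_inter, Finset.mem_coe,
        SimpleGraph.mem_neighborFinset]
      constructor
      · rintro ⟨h1, h2, _⟩; exact ⟨h1, h2⟩
      · rintro ⟨h1, h2⟩; exact ⟨h1, h2, hAS h2⟩
    rw [hset, Set.ncard_coe_finset] at hcard
    exact absurd hcard (not_le.2 (hcon v hvS hvA'))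
  have := Set.mem_sInter.1 (hspan (Finset.mem_coe.2 hx)) _ hmem
  exact Finset.mem_coe.1 this

private lemma boot_Q_bound [DecidableEq V] (G : SimpleGraph V) [G.LocallyFinite] (k : ℕ)
    (S : Finset V) :
    ∀ (n : ℕ) (A : Finset V), (S \ A).card = n → A ⊆ S →
      (S : Set V) ⊆ G.bootClosureIn k (S : Set V) (A : Set V) →
      2 * k * (S \ A).card ≤
        ∑ u ∈ S \ A, ((G.neighborFinset u ∩ (S \ A)).card
          + 2 * (G.neighborFinset u ∩ A).card) := by
  intro n
  induction n with
  | zero =>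
    intro A hn _ _
    rw [Finset.card_eq_zero] at hn
    simp [hn]
  | succ n ih =>
    intro A hn hAS hsp
    have hne : ¬ S ⊆ A := by
      intro hSA
      have : S \ A = ∅ := Finset.sdiff_eq_empty_iff_subset.2 hSA
      rw [this] at hn; simp at hn
    obtain ⟨v, hvS, hvA, hk⟩ := boot_exists_infectable G k S A hAS hsp hne
    set A' := insert v A with hA'
    have hvSA : v ∈ S \ A := Finset.mem_sdiff.2 ⟨hvS, hvA⟩
    have hsd : S \ A' = (S \ A).erase v := by
      rw [hA', Finset.sdiff_insert]
    have hvnot : v ∉ S \ A' := by simp [hA']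
    have hins : S \ A = insert v (S \ A') := by
      rw [hsd, Finset.insert_erase hvSA]
    have hcard' : (S \ A').card = n := by
      rw [hsd, Finset.card_erase_of_mem hvSA, hn]
      omega
    have hA'S : A' ⊆ S := Finset.insert_subset hvS hAS
    have hsp' : (S : Set V) ⊆ G.bootClosureIn k (S : Set V) (A' : Set V) := by
      refine hsp.trans (boot_mono G k _ ?_)
      rw [hA']
      exact_mod_cast Finset.coe_subset.2 (Finset.subset_insert v A)
    have IH := ih A' hcard' hA'S hsp'
    rw [hcard'] at IH
    -- pointwise identity on S \ A'
    have point : ∀ u ∈ S \ A',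
        ((G.neighborFinset u ∩ (S \ A)).card + 2 * (G.neighborFinset u ∩ A).card)
          + (if v ∈ G.neighborFinset u then 1 else 0)
        = (G.neighborFinset u ∩ (S \ A')).card + 2 * (G.neighborFinset u ∩ A').card := by
      intro u _
      rw [hins, boot_card_inter_insert _ _ _ hvnot, hA',
        boot_card_inter_insert _ _ _ hvA]
      ring
    have hsum : (∑ u ∈ S \ A', ((G.neighborFinset u ∩ (S \ A)).card
            + 2 * (G.neighborFinset u ∩ A).card))
          + (G.neighborFinset v ∩ (S \ A')).card
        = ∑ u ∈ S \ A', ((G.neighborFinset u ∩ (S \ A')).card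
            + 2 * (G.neighborFinset u ∩ A').card) := by
      rw [← boot_sum_ite G v (S \ A'), ← Finset.sum_add_distrib]
      exact Finset.sum_congr rfl point
    have htv : (G.neighborFinset v ∩ (S \ A)).card
        = (G.neighborFinset v ∩ (S \ A')).card := by
      rw [hins, boot_card_inter_insert _ _ _ hvnot]
      simp
    have hQ : ∑ u ∈ S \ A, ((G.neighborFinset u ∩ (S \ A)).card
          + 2 * (G.neighborFinset u ∩ A).card)
        = ((G.neighborFinset v ∩ (S \ A)).card + 2 * (G.neighborFinset v ∩ A).card)
          + ∑ u ∈ S \ A', ((G.neighborFinset u ∩ (S \ A)).card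
            + 2 * (G.neighborFinset u ∩ A).card) := by
      rw [hsd]
      exact (Finset.add_sum_erase _ _ hvSA).symm
    rw [hn, hQ, htv]
    have h2k : 2 * k ≤ 2 * (G.neighborFinset v ∩ A).card := by omega
    nlinarith [IH, hsum, h2k]

theorem internally_spanned_perimeter_bound (G : SimpleGraph V) [G.LocallyFinite]
    (d k : ℕ) (hk : 1 ≤ k) (hreg : ∀ v : V, G.degree v = d)
    (S A : Finset V) (hspan : G.InternallySpanned k (S : Set V) (A : Set V)) :
    (d : ℝ) * A.card + ((S.card : ℝ) - A.card) * ((d : ℝ) - 2 * k)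
        ≥ (∑ v ∈ S, {u | G.Adj v u ∧ u ∉ S}.ncard : ℕ) ∧
    ∀ h : ℝ, 0 < h + 2 * k - d →
      h * S.card < (∑ v ∈ S, {u | G.Adj v u ∧ u ∉ S}.ncard : ℕ) →
      (S.card : ℝ) * (h - d + 2 * k) / (2 * k) < A.card := by
  classical
  obtain ⟨hAS', hsp⟩ := hspan
  have hAS : A ⊆ S := Finset.coe_subset.1 hAS'
  have hxs : A.card ≤ S.card := Finset.card_le_card hAS
  have hWsum : (∑ v ∈ S, {u | G.Adj v u ∧ u ∉ S}.ncard)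
      = ∑ v ∈ S, (G.neighborFinset v \ S).card := by
    refine Finset.sum_congr rfl fun v _ => ?_
    rw [show {u | G.Adj v u ∧ u ∉ S} = ((G.neighborFinset v \ S : Finset V) : Set V) by
      ext u; simp [SimpleGraph.mem_neighborFinset]]
    exact Set.ncard_coe_finset _
  have hdeg : ∀ v : V, (G.neighborFinset v ∩ S).card + (G.neighborFinset v \ S).card = d := by
    intro v
    rw [Finset.card_inter_add_card_sdiff, SimpleGraph.card_neighborFinset_eq_degree, hreg v]
  have hWD : (∑ v ∈ S, (G.neighborFinset v \ S).card)
      + (∑ v ∈ S, (G.neighborFinset v ∩ S).card) = d * S.card := by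
    rw [← Finset.sum_add_distrib]
    rw [Finset.sum_congr rfl fun v _ => by rw [add_comm, hdeg v]]
    rw [Finset.sum_const, smul_eq_mul, mul_comm]
  have hsplit : ∀ v : V, (G.neighborFinset v ∩ S).card
      = (G.neighborFinset v ∩ (S \ A)).card + (G.neighborFinset v ∩ A).card := by
    intro v
    rw [← Finset.card_union_of_disjoint
      (Finset.sdiff_disjoint.mono Finset.inter_subset_right Finset.inter_subset_right),
      ← Finset.inter_union_distrib_left, Finset.sdiff_union_of_subset hAS]
  have hDsum : ∑ v ∈ S, (G.neighborFinset v ∩ S).card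
      = (∑ v ∈ S \ A, ((G.neighborFinset v ∩ (S \ A)).card
          + (G.neighborFinset v ∩ A).card))
        + ∑ v ∈ A, (G.neighborFinset v ∩ S).card := by
    rw [← Finset.sum_sdiff hAS]
    congr 1
    exact Finset.sum_congr rfl fun v _ => hsplit v
  have hAsum : ∑ v ∈ S \ A, (G.neighborFinset v ∩ A).card
      ≤ ∑ v ∈ A, (G.neighborFinset v ∩ S).card := by
    rw [boot_sum_inter_comm]
    exact Finset.sum_le_sum fun v _ =>
      Finset.card_le_card (Finset.inter_subset_inter (Finset.Subset.refl _) Finset.sdiff_subset)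
  have hQ := boot_Q_bound G k S (S \ A).card A rfl hAS hsp
  have hD : 2 * k * (S \ A).card ≤ ∑ v ∈ S, (G.neighborFinset v ∩ S).card := by
    rw [hDsum]
    calc 2 * k * (S \ A).card
        ≤ ∑ u ∈ S \ A, ((G.neighborFinset u ∩ (S \ A)).card
            + 2 * (G.neighborFinset u ∩ A).card) := hQ
      _ = (∑ u ∈ S \ A, ((G.neighborFinset u ∩ (S \ A)).card
            + (G.neighborFinset u ∩ A).card))
          + ∑ u ∈ S \ A, (G.neighborFinset u ∩ A).card := by
          rw [← Finset.sum_add_distrib]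
          exact Finset.sum_congr rfl fun u _ => by ring
      _ ≤ _ := Nat.add_le_add_left hAsum _
  rw [Finset.card_sdiff_of_subset hAS] at hD
  have hmain : (∑ v ∈ S, (G.neighborFinset v \ S).card)
      + 2 * k * (S.card - A.card) ≤ d * S.card := by
    calc (∑ v ∈ S, (G.neighborFinset v \ S).card) + 2 * k * (S.card - A.card)
        ≤ (∑ v ∈ S, (G.neighborFinset v \ S).card)
          + ∑ v ∈ S, (G.neighborFinset v ∩ S).card := Nat.add_le_add_left hD _
      _ = d * S.card := hWD
  have hR : ((∑ v ∈ S, {u | G.Adj v u ∧ u ∉ S}.ncard : ℕ) : ℝ)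
      + 2 * k * ((S.card : ℝ) - A.card) ≤ d * S.card := by
    rw [hWsum]
    have := hmain
    have hcast : ((S.card - A.card : ℕ) : ℝ) = (S.card : ℝ) - A.card := by
      push_cast [Nat.cast_sub hxs]; ring
    calc ((∑ v ∈ S, (G.neighborFinset v \ S).card : ℕ) : ℝ)
          + 2 * k * ((S.card : ℝ) - A.card)
        = (((∑ v ∈ S, (G.neighborFinset v \ S).card)
            + 2 * k * (S.card - A.card) : ℕ) : ℝ) := by
          push_cast [Nat.cast_sub hxs]; ring
      _ ≤ ((d * S.card : ℕ) : ℝ) := by exact_mod_cast hmain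
      _ = (d : ℝ) * S.card := by push_cast; ring
  have first : (d : ℝ) * A.card + ((S.card : ℝ) - A.card) * ((d : ℝ) - 2 * k)
      ≥ ((∑ v ∈ S, {u | G.Adj v u ∧ u ∉ S}.ncard : ℕ) : ℝ) := by
    have hid : (d : ℝ) * A.card + ((S.card : ℝ) - A.card) * ((d : ℝ) - 2 * k)
        = (d : ℝ) * S.card - 2 * k * ((S.card : ℝ) - A.card) := by ring
    linarith [hR]
  refine ⟨first, ?_⟩
  intro h hh hw
  have hkpos : (0 : ℝ) < 2 * k := by
    have : (1 : ℝ) ≤ k := by exact_mod_cast hk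
    linarith
  rw [div_lt_iff₀ hkpos]
  nlinarith [first, hw]
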